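/- Let L be the language with one binary relation symbol E and two unary relation symbols R and G, and let A be the L-structure with domain {1,2,3}, E = {(1,1),(2,3),(3,2)}, R = {1,2}, G = {1,3}. Then there is no nonempty L-structure with at most two elements that satisfies exactly the same positive Horn sentences as A. -/

import Mathlib

open FirstOrder Language

/-- Positive Horn bounded formulas over a relational language: built from atomic
formulas `R(v₁,…,vₙ)` (relation symbols applied to variables, no equality) using
only conjunction, existential quantification, and universal quantification. -/
inductive IsPH (L : FirstOrder.Language) : ∀ {n : ℕ}, L.BoundedFormula Empty n → Prop
  | rel {n l : ℕ} (R : L.Relations l) (v : Fin l → Fin n) :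
      IsPH L (BoundedFormula.rel R fun i => Term.var (Sum.inr (v i)))
  | inf {n : ℕ} {φ ψ : L.BoundedFormula Empty n} :
      IsPH L φ → IsPH L ψ → IsPH L (φ ⊓ ψ)
  | ex {n : ℕ} {φ : L.BoundedFormula Empty (n + 1)} : IsPH L φ → IsPH L φ.ex
  | all {n : ℕ} {φ : L.BoundedFormula Empty (n + 1)} : IsPH L φ → IsPH L φ.all

/-- `φ` is true in the `L`-structure on `M` given by `S`. -/
def RealizeIn (L : FirstOrder.Language) (M : Type*) (S : L.Structure M)
    (φ : L.Sentence) : Prop :=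
  @FirstOrder.Language.Sentence.Realize L M S φ

/-- Relation symbols: one binary `E` and two unary `R`, `G`. -/
inductive SymERG : ℕ → Type
  | E : SymERG 2
  | R : SymERG 1
  | G : SymERG 1

/-- The relational language with one binary relation symbol `E` and two unary
relation symbols `R` and `G`. -/
def Lerg : FirstOrder.Language := ⟨fun _ => Empty, SymERG⟩

/-- The structure `A` on domain `{1,2,3}` (encoded as `Fin 3`, with `0,1,2` standing
for `1,2,3`): `E = {(1,1),(2,3),(3,2)}`, `R = {1,2}`, `G = {1,3}`. -/
def strA : Lerg.Structure (Fin 3) where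
  funMap := fun f _ => Empty.elim f
  RelMap := fun S x =>
    match S, x with
    | SymERG.E, x => (x 0 = 0 ∧ x 1 = 0) ∨ (x 0 = 1 ∧ x 1 = 2) ∨ (x 0 = 2 ∧ x 1 = 1)
    | SymERG.R, x => x 0 = 0 ∨ x 0 = 1
    | SymERG.G, x => x 0 = 0 ∨ x 0 = 2

def atomE {n : ℕ} (i j : Fin n) : Lerg.BoundedFormula Empty n :=
  BoundedFormula.rel SymERG.E fun k => Term.var (Sum.inr (![i,j] k))

def atomR {n : ℕ} (i : Fin n) : Lerg.BoundedFormula Empty n :=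
  BoundedFormula.rel SymERG.R fun k => Term.var (Sum.inr (![i] k))

lemma realize_atomE {M : Type*} [S : Lerg.Structure M] {n : ℕ} (i j : Fin n)
    (v : Empty → M) (xs : Fin n → M) :
    (atomE i j).Realize v xs ↔ S.RelMap SymERG.E ![xs i, xs j] := by
  have : (fun k => xs (![i,j] k)) = ![xs i, xs j] := by
    funext k; fin_cases k <;> rfl
  simp only [atomE, BoundedFormula.Realize, Term.realize, Sum.elim_inr, this]

lemma realize_atomR {M : Type*} [S : Lerg.Structure M] {n : ℕ} (i : Fin n)
    (v : Empty → M) (xs : Fin n → M) :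
    (atomR i).Realize v xs ↔ S.RelMap SymERG.R ![xs i] := by
  have : (fun k => xs (![i] k)) = ![xs i] := by
    funext k; fin_cases k <;> rfl
  simp only [atomR, BoundedFormula.Realize, Term.realize, Sum.elim_inr, this]

def S1 : Lerg.Sentence := ((atomE 0 0) ⊓ (atomR 0)).ex
def S4 : Lerg.Sentence := (atomE 0 0).all
def S5 : Lerg.Sentence := ((atomE 0 1).ex).all
def S6 : Lerg.Sentence := ((atomE 0 1 ⊓ atomR 1).ex).all

lemma ph1 : IsPH Lerg S1 := by
  unfold S1 atomE atomR; exact IsPH.ex (IsPH.inf (IsPH.rel _ _) (IsPH.rel _ _))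
lemma ph4 : IsPH Lerg S4 := by
  unfold S4 atomE; exact IsPH.all (IsPH.rel _ _)
lemma ph5 : IsPH Lerg S5 := by
  unfold S5 atomE; exact IsPH.all (IsPH.ex (IsPH.rel _ _))
lemma ph6 : IsPH Lerg S6 := by
  unfold S6 atomE atomR; exact IsPH.all (IsPH.ex (IsPH.inf (IsPH.rel _ _) (IsPH.rel _ _)))

lemma real_S1 (M : Type*) (S : Lerg.Structure M) :
    RealizeIn Lerg M S S1 ↔ ∃ a : M, S.RelMap SymERG.E ![a,a] ∧ S.RelMap SymERG.R ![a] := by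
  simp [RealizeIn, Sentence.Realize, Formula.Realize, S1, BoundedFormula.realize_ex,
    BoundedFormula.realize_inf, realize_atomE, realize_atomR, Fin.snoc]

lemma real_S4 (M : Type*) (S : Lerg.Structure M) :
    RealizeIn Lerg M S S4 ↔ ∀ a : M, S.RelMap SymERG.E ![a,a] := by
  simp [RealizeIn, Sentence.Realize, Formula.Realize, S4, BoundedFormula.realize_all,
    realize_atomE, Fin.snoc]

lemma real_S5 (M : Type*) (S : Lerg.Structure M) :
    RealizeIn Lerg M S S5 ↔ ∀ a : M, ∃ b : M, S.RelMap SymERG.E ![a,b] := by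
  simp [RealizeIn, Sentence.Realize, Formula.Realize, S5, BoundedFormula.realize_all,
    BoundedFormula.realize_ex, realize_atomE, Fin.snoc]

lemma real_S6 (M : Type*) (S : Lerg.Structure M) :
    RealizeIn Lerg M S S6 ↔
      ∀ a : M, ∃ b : M, S.RelMap SymERG.E ![a,b] ∧ S.RelMap SymERG.R ![b] := by
  simp [RealizeIn, Sentence.Realize, Formula.Realize, S6, BoundedFormula.realize_all,
    BoundedFormula.realize_ex, BoundedFormula.realize_inf, realize_atomE, realize_atomR, Fin.snoc]

lemma strA_E (x : Fin 2 → Fin 3) : @Structure.RelMap Lerg (Fin 3) strA 2 SymERG.E x ↔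
    ((x 0 = 0 ∧ x 1 = 0) ∨ (x 0 = 1 ∧ x 1 = 2) ∨ (x 0 = 2 ∧ x 1 = 1)) := Iff.rfl

lemma strA_R (x : Fin 1 → Fin 3) : @Structure.RelMap Lerg (Fin 3) strA 1 SymERG.R x ↔
    (x 0 = 0 ∨ x 0 = 1) := Iff.rfl

lemma A1 : RealizeIn Lerg (Fin 3) strA S1 := by
  rw [real_S1]; exact ⟨0, by simp [strA_E, strA_R], by simp [strA_E, strA_R]⟩

lemma A4 : ¬ RealizeIn Lerg (Fin 3) strA S4 := by
  rw [real_S4]; intro h; have := h 1; simp [strA_E, strA_R] at this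

lemma A5 : RealizeIn Lerg (Fin 3) strA S5 := by
  rw [real_S5]; intro a; fin_cases a
  · exact ⟨0, by simp [strA_E, strA_R]⟩
  · exact ⟨2, by simp [strA_E, strA_R]⟩
  · exact ⟨1, by simp [strA_E, strA_R]⟩

lemma A6 : ¬ RealizeIn Lerg (Fin 3) strA S6 := by
  rw [real_S6]; intro h
  obtain ⟨b, hb, hrb⟩ := h 1
  fin_cases b <;> simp [strA_E, strA_R] at hb hrb

/-- No nonempty structure with at most two elements satisfies exactly the same
positive Horn sentences as `A`. -/
theorem stmt13 :
    ¬ ∃ (C : Type) (SC : Lerg.Structure C) (x y : C),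
      (∀ z : C, z = x ∨ z = y) ∧
      ∀ φ : Lerg.Sentence, IsPH Lerg φ →
        (RealizeIn Lerg (Fin 3) strA φ ↔ RealizeIn Lerg C SC φ) := by
  rintro ⟨C, SC, x, y, hC, h⟩
  obtain ⟨c, hEc, hRc⟩ := (real_S1 C SC).mp ((h S1 ph1).mp A1)
  have h4 : ¬ ∀ a : C, SC.RelMap SymERG.E ![a,a] :=
    fun hc => A4 ((h S4 ph4).mpr ((real_S4 C SC).mpr hc))
  have h5 := (real_S5 C SC).mp ((h S5 ph5).mp A5)
  have h6 : ¬ ∀ a : C, ∃ b : C, SC.RelMap SymERG.E ![a,b] ∧ SC.RelMap SymERG.R ![b] :=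
    fun hc => A6 ((h S6 ph6).mpr ((real_S6 C SC).mpr hc))
  push_neg at h4 h6
  obtain ⟨u, hu⟩ := h6
  have huc : u ≠ c := fun e => hu c (by rw [e]; exact hEc) hRc
  have cover : ∀ z : C, z = u ∨ z = c := by
    intro z
    rcases hC u with hu' | hu' <;> rcases hC c with hc' | hc' <;> rcases hC z with hz | hz <;>
      first
        | exact absurd (hu'.trans hc'.symm) huc
        | (left; rw [hz, ← hu'])
        | (right; rw [hz, ← hc'])
  obtain ⟨v, hv⟩ := h5 u
  have hvu : v = u := by
    rcases cover v with rfl | rfl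
    · rfl
    · exact absurd hRc (hu v hv)
  have hEuu : SC.RelMap SymERG.E ![u,u] := hvu ▸ hv
  obtain ⟨w, hw⟩ := h4
  rcases cover w with rfl | rfl
  · exact hw hEuu
  · exact hw hEc
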